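/- A complex Hadamard matrix H of order n can be extended to a full system of n mutually unbiased Hadamard matrices if and only if its entrywise conjugate H̄ can, if and only if its transpose H^T can, if and only if its adjoint H* can. -/

import Mathlib

open Finset Matrix

/-- `H` is a complex Hadamard matrix of order `n`. -/
def IsCHM (n : ℕ) (H : Matrix (Fin n) (Fin n) ℂ) : Prop :=
  (∀ j k : Fin n, ‖H j k‖ = 1) ∧
  ∀ k k' : Fin n, k ≠ k' → (∑ j : Fin n, H j k * (starRingEnd ℂ) (H j k')) = 0

/-- Two matrices are unbiased: all cross inner products of columns have modulus `√n`. -/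
def UnbiasedM (n : ℕ) (H₁ H₂ : Matrix (Fin n) (Fin n) ℂ) : Prop :=
  ∀ k k' : Fin n,
    ‖∑ j : Fin n, H₁ j k * (starRingEnd ℂ) (H₂ j k')‖ = Real.sqrt n

/-- `H` extends to a full system of `n` mutually unbiased Hadamard matrices. -/
def ExtendsToFullMUH (n : ℕ) (H : Matrix (Fin n) (Fin n) ℂ) : Prop :=
  ∃ M : Fin n → Matrix (Fin n) (Fin n) ℂ,
    (∃ i : Fin n, M i = H) ∧ (∀ i : Fin n, IsCHM n (M i)) ∧
    ∀ i i' : Fin n, i ≠ i' → UnbiasedM n (M i) (M i')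

/-- The inner-product sum is an entry of `H₂ᴴ * H₁`. -/
lemma sum_eq_entry {n : ℕ} (A B : Matrix (Fin n) (Fin n) ℂ) (k k' : Fin n) :
    (∑ j : Fin n, A j k * (starRingEnd ℂ) (B j k')) = (Bᴴ * A) k' k := by
  simp [Matrix.mul_apply, Matrix.conjTranspose_apply, mul_comm]

lemma chm_gram {n : ℕ} {H : Matrix (Fin n) (Fin n) ℂ} (h : IsCHM n H) :
    Hᴴ * H = (n : ℂ) • 1 := by
  ext a b
  rw [Matrix.mul_apply]
  by_cases hab : b = a
  · subst hab
    simp only [Matrix.conjTranspose_apply, Matrix.smul_apply, Matrix.one_apply_eq, smul_eq_mul,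
      mul_one]
    have h1 : ∀ j, (starRingEnd ℂ) (H j b) * H j b = 1 := fun j => by
      rw [mul_comm, Complex.mul_conj]
      norm_cast
      rw [Complex.normSq_eq_norm_sq, h.1 j b]; norm_num
    simp [h1]
  · simp only [Matrix.smul_apply, Matrix.one_apply_ne (fun e : a = b => hab e.symm),
      smul_eq_mul, mul_zero, Matrix.conjTranspose_apply]
    calc (∑ j : Fin n, (starRingEnd ℂ) (H j a) * H j b)
        = ∑ j : Fin n, H j b * (starRingEnd ℂ) (H j a) :=
          Finset.sum_congr rfl fun j _ => mul_comm _ _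
      _ = 0 := h.2 b a (fun e => hab e)

lemma gram_comm {n : ℕ} (hn : (n : ℂ) ≠ 0) {H : Matrix (Fin n) (Fin n) ℂ}
    (h : Hᴴ * H = (n : ℂ) • 1) : H * Hᴴ = (n : ℂ) • 1 := by
  have h1 : ((n : ℂ)⁻¹ • Hᴴ) * H = 1 := by
    rw [Matrix.smul_mul, h, smul_smul, inv_mul_cancel₀ hn, one_smul]
  have h2 : H * ((n : ℂ)⁻¹ • Hᴴ) = 1 := mul_eq_one_comm.mpr h1
  calc H * Hᴴ = (n : ℂ) • (H * ((n : ℂ)⁻¹ • Hᴴ)) := by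
        rw [Matrix.mul_smul, smul_smul, mul_inv_cancel₀ hn, one_smul]
    _ = (n : ℂ) • 1 := by rw [h2]

/-- Conjugating a full MUH system. -/
lemma extends_conj {n : ℕ} {H : Matrix (Fin n) (Fin n) ℂ}
    (h : ExtendsToFullMUH n H) : ExtendsToFullMUH n (H.map (starRingEnd ℂ)) := by
  obtain ⟨M, ⟨i0, hi0⟩, hchm, hub⟩ := h
  refine ⟨fun i => (M i).map (starRingEnd ℂ), ⟨i0, by simp [hi0]⟩, ?_, ?_⟩
  · intro i
    constructor
    · intro j k
      simp [Matrix.map_apply, (hchm i).1 j k]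
    · intro k k' hkk'
      have key : (∑ j : Fin n, (M i).map (starRingEnd ℂ) j k *
          (starRingEnd ℂ) ((M i).map (starRingEnd ℂ) j k')) =
          (starRingEnd ℂ) (∑ j : Fin n, M i j k * (starRingEnd ℂ) (M i j k')) := by
        rw [map_sum]
        exact Finset.sum_congr rfl fun j _ => by
          simp [Matrix.map_apply, mul_comm]
      rw [key, (hchm i).2 k k' hkk', map_zero]
  · intro i i' hii' k k'
    have key : (∑ j : Fin n, (M i).map (starRingEnd ℂ) j k *
        (starRingEnd ℂ) ((M i').map (starRingEnd ℂ) j k')) =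
        (starRingEnd ℂ) (∑ j : Fin n, M i j k * (starRingEnd ℂ) (M i' j k')) := by
      rw [map_sum]
      exact Finset.sum_congr rfl fun j _ => by
        simp [Matrix.map_apply, mul_comm]
    rw [key, Complex.norm_conj]
    exact hub i i' hii' k k'

/-- Taking adjoints: given a full MUH system `M` containing `H = M i0`, the system
consisting of `Hᴴ` together with `(1/√n) • (Hᴴ * M i)` for `i ≠ i0` is a full MUH
system containing `Hᴴ`. -/
lemma extends_adj {n : ℕ} {H : Matrix (Fin n) (Fin n) ℂ}
    (h : ExtendsToFullMUH n H) : ExtendsToFullMUH n Hᴴ := by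
  obtain ⟨M, ⟨i0, hi0⟩, hchm, hub⟩ := h
  have hn : 0 < n := i0.pos
  have hnR : (0 : ℝ) < n := by exact_mod_cast hn
  have hnC : (n : ℂ) ≠ 0 := by exact_mod_cast hn.ne'
  have hsq : Real.sqrt n * Real.sqrt n = n := Real.mul_self_sqrt hnR.le
  have hsqpos : (0 : ℝ) < Real.sqrt n := Real.sqrt_pos.mpr hnR
  set c : ℂ := ((Real.sqrt n : ℝ) : ℂ)⁻¹ with hc
  have hcc : c * c * n = 1 := by
    rw [hc, ← mul_inv]
    norm_cast
    rw [hsq]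
    field_simp
  have hstarc : star c = c := by
    rw [hc]
    simp [← Complex.ofReal_inv]
  have habsc : ‖c‖ = (Real.sqrt n)⁻¹ := by
    rw [hc, norm_inv, Complex.norm_real, Real.norm_eq_abs, abs_of_pos hsqpos]
  have habs_star : ∀ z : ℂ, ‖star z‖ = ‖z‖ := fun z =>
    Complex.norm_conj z
  -- gram relations
  have gA : ∀ i, (M i)ᴴ * M i = (n : ℂ) • 1 := fun i => chm_gram (hchm i)
  have gB : ∀ i, M i * (M i)ᴴ = (n : ℂ) • 1 := fun i => gram_comm hnC (gA i)
  -- unbiasedness in gram form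
  have unb : ∀ i i', i ≠ i' → ∀ k k',
      ‖((M i')ᴴ * M i) k k'‖ = Real.sqrt n := by
    intro i i' hii' k k'
    rw [← sum_eq_entry]
    exact hub i i' hii' k' k
  -- the key product identity
  have base : ∀ i i' : Fin n, ((M i0)ᴴ * M i')ᴴ * ((M i0)ᴴ * M i)
      = (n : ℂ) • ((M i')ᴴ * M i) := by
    intro i i'
    rw [Matrix.conjTranspose_mul, Matrix.conjTranspose_conjTranspose, Matrix.mul_assoc,
      ← Matrix.mul_assoc (M i0), gB i0, Matrix.smul_mul, Matrix.one_mul, Matrix.mul_smul]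
  set P : Fin n → Matrix (Fin n) (Fin n) ℂ :=
    fun i => if i = i0 then (M i0)ᴴ else c • ((M i0)ᴴ * M i) with hP
  have hPeq : ∀ i, i = i0 → P i = (M i0)ᴴ := by
    intro i hi; rw [hP]; simp [hi]
  have hPne : ∀ i, i ≠ i0 → P i = c • ((M i0)ᴴ * M i) := by
    intro i hi; rw [hP]; simp [hi]
  -- entry bound for the off-i0 matrices
  have Pabs : ∀ i, ∀ j k, ‖P i j k‖ = 1 := by
    intro i j k
    by_cases hi : i = i0
    · rw [hPeq i hi, Matrix.conjTranspose_apply, habs_star]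
      exact (hchm i0).1 k j
    · rw [hPne i hi]
      simp only [Matrix.smul_apply, smul_eq_mul]
      rw [norm_mul, habsc, unb i i0 hi j k, inv_mul_cancel₀ hsqpos.ne']
  -- gram of P i
  have Pgram : ∀ i, (P i)ᴴ * P i = (n : ℂ) • 1 := by
    intro i
    by_cases hi : i = i0
    · rw [hPeq i hi, Matrix.conjTranspose_conjTranspose]
      exact gB i0
    · rw [hPne i hi, Matrix.conjTranspose_smul, Matrix.smul_mul, Matrix.mul_smul, smul_smul,
        hstarc, base i i, gA i, smul_smul, smul_smul]
      congr 1
      rw [hcc, one_mul]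
  refine ⟨P, ⟨i0, by rw [hPeq i0 rfl, hi0]⟩, ?_, ?_⟩
  · intro i
    refine ⟨Pabs i, ?_⟩
    intro k k' hkk'
    rw [sum_eq_entry, Pgram i]
    simp [Matrix.one_apply_ne (fun e : k' = k => hkk' e.symm)]
  · intro i i' hii' k k'
    rw [sum_eq_entry]
    by_cases hi : i = i0
    · have hi' : i' ≠ i0 := fun e => hii' (hi.trans e.symm)
      have key : (P i')ᴴ * P i = (star c) • ((n : ℂ) • (M i')ᴴ) := by
        rw [hPeq i hi, hPne i' hi', Matrix.conjTranspose_smul, Matrix.conjTranspose_mul,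
          Matrix.conjTranspose_conjTranspose, Matrix.smul_mul, Matrix.mul_assoc, gB i0,
          Matrix.mul_smul, Matrix.mul_one]
      rw [key]
      simp only [Matrix.smul_apply, smul_eq_mul, hstarc, Matrix.conjTranspose_apply]
      rw [norm_mul, norm_mul, habsc, Complex.norm_natCast, habs_star,
        (hchm i').1 k k', mul_one, inv_mul_eq_div, div_eq_iff hsqpos.ne', hsq]
    · by_cases hi' : i' = i0
      · have key : (P i')ᴴ * P i = c • ((n : ℂ) • M i) := by
          rw [hPeq i' hi', hPne i hi, Matrix.conjTranspose_conjTranspose, Matrix.mul_smul,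
            ← Matrix.mul_assoc, gB i0, Matrix.smul_mul, Matrix.one_mul]
        rw [key]
        simp only [Matrix.smul_apply, smul_eq_mul]
        rw [norm_mul, norm_mul, habsc, Complex.norm_natCast,
          (hchm i).1 k' k, mul_one, inv_mul_eq_div, div_eq_iff hsqpos.ne', hsq]
      · have key : (P i')ᴴ * P i = (M i')ᴴ * M i := by
          rw [hPne i hi, hPne i' hi', Matrix.conjTranspose_smul, Matrix.smul_mul,
            Matrix.mul_smul, smul_smul, hstarc, base i i', smul_smul,
            show c * c * (n : ℂ) = 1 from hcc, one_smul]
        rw [key]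
        exact unb i i' hii' k' k

lemma conj_conj {n : ℕ} (H : Matrix (Fin n) (Fin n) ℂ) :
    (H.map (starRingEnd ℂ)).map (starRingEnd ℂ) = H := by
  ext j k; simp [Matrix.map_apply]

lemma transpose_eq {n : ℕ} (H : Matrix (Fin n) (Fin n) ℂ) :
    H.transpose = (H.map (starRingEnd ℂ)).conjTranspose := by
  ext j k
  simp [Matrix.conjTranspose_apply, Matrix.map_apply, Matrix.transpose_apply]

/-- A complex Hadamard matrix extends to a full MUH system iff its conjugate does,
iff its transpose does, iff its adjoint does. -/
theorem extendsToFullMUH_conj_transpose_adjoint (n : ℕ)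
    (H : Matrix (Fin n) (Fin n) ℂ) (hH : IsCHM n H) :
    (ExtendsToFullMUH n H ↔ ExtendsToFullMUH n (H.map (starRingEnd ℂ))) ∧
    (ExtendsToFullMUH n H ↔ ExtendsToFullMUH n H.transpose) ∧
    (ExtendsToFullMUH n H ↔ ExtendsToFullMUH n H.conjTranspose) := by
  have conj_iff : ∀ A : Matrix (Fin n) (Fin n) ℂ,
      ExtendsToFullMUH n A ↔ ExtendsToFullMUH n (A.map (starRingEnd ℂ)) := by
    intro A
    constructor
    · exact extends_conj
    · intro h
      have := extends_conj h
      rwa [conj_conj] at this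
  have adj_iff : ∀ A : Matrix (Fin n) (Fin n) ℂ,
      ExtendsToFullMUH n A ↔ ExtendsToFullMUH n Aᴴ := by
    intro A
    constructor
    · exact extends_adj
    · intro h
      have := extends_adj h
      rwa [Matrix.conjTranspose_conjTranspose] at this
  refine ⟨conj_iff H, ?_, adj_iff H⟩
  rw [transpose_eq]
  exact (conj_iff H).trans (adj_iff (H.map (starRingEnd ℂ)))
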